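/- Let $p$ be a positive integer. Suppose $t \in (0,1)$ and there exist $n \in \mathbb{N}$, $\gamma_1,\dots,\gamma_n \in \Phi_p$, and a positive integer $D$ such that $2 = \sum_{i=1}^n \gamma_i + tD$. Then $t \le 1 - \min\{\frac{1}{6}, \frac{1}{p(p+1)}\}$. -/

import Mathlib

/-- The hyperstandard set `Φ_p = {1 - k/(p·m) | m ∈ ℕ⁺, 0 ≤ k ≤ p} ∩ [0,1]`. -/
def Phi (p : ℕ) : Set ℝ :=
  {x | (∃ m k : ℕ, 0 < m ∧ k ≤ p ∧ x = 1 - (k : ℝ) / (p * m)) ∧ 0 ≤ x ∧ x ≤ 1}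

private lemma div_gap (d K N : ℕ) (hd : 0 < d) (h : (K:ℝ)/d < N) :
    (K:ℝ)/d ≤ (N:ℝ) - 1/d := by
  have hd' : (0:ℝ) < d := by exact_mod_cast hd
  rw [div_lt_iff₀ hd'] at h
  have h1 : K < N * d := by exact_mod_cast h
  have h2 : (K:ℝ) + 1 ≤ (N:ℝ) * d := by exact_mod_cast h1
  rw [div_le_iff₀ hd', sub_mul, one_div, inv_mul_cancel₀ hd'.ne']
  linarith

private lemma pos_lb (p : ℕ) (hp : 0 < p) (x : ℝ) (hx : x ∈ Phi p) (h0 : 0 < x) :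
    min (1/(p:ℝ)) (1/2) ≤ x := by
  obtain ⟨⟨m, k, hm, hk, hxe⟩, hx0, hx1⟩ := hx
  have hp' : (0:ℝ) < p := by exact_mod_cast hp
  rcases Nat.lt_or_ge m 2 with hm2 | hm2
  · -- m = 1
    have hm1 : m = 1 := by omega
    subst hm1
    have hkp : (k:ℝ) < p := by
      by_contra hc
      push_neg at hc
      have : (k:ℝ)/((p:ℝ)*1) ≥ 1 := by
        rw [mul_one, ge_iff_le, le_div_iff₀ hp']; linarith
      rw [hxe] at h0; linarith
    have hkp' : k < p := by exact_mod_cast hkp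
    have hk1 : (k:ℝ) ≤ (p:ℝ) - 1 := by
      have : k + 1 ≤ p := hkp'
      have := (Nat.cast_le (α := ℝ)).mpr this
      push_cast at this; linarith
    have : (k:ℝ)/((p:ℝ)*1) ≤ 1 - 1/p := by
      rw [mul_one, div_le_iff₀ hp', sub_mul, one_div, inv_mul_cancel₀ hp'.ne']
      linarith
    have : 1/(p:ℝ) ≤ x := by rw [hxe]; linarith
    exact le_trans (min_le_left _ _) this
  · -- m ≥ 2 : x ≥ 1/2
    have hm' : (2:ℝ) ≤ m := by exact_mod_cast hm2
    have hmp : (0:ℝ) < (p:ℝ) * m := by positivity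
    have : (k:ℝ)/((p:ℝ)*m) ≤ 1/2 := by
      rw [div_le_div_iff₀ hmp (by norm_num)]
      have hk' : (k:ℝ) ≤ p := by exact_mod_cast hk
      nlinarith
    have : (1:ℝ)/2 ≤ x := by rw [hxe]; linarith
    exact le_trans (min_le_right _ _) this

set_option maxHeartbeats 2000000 in
private lemma key_gap (p n : ℕ) (hp : 0 < p) (γ : Fin n → ℝ) (hγ : ∀ i, γ i ∈ Phi p)
    (h1 : 1 < ∑ i, γ i) :
    1 + min (1/6 : ℝ) (1 / ((p : ℝ) * (p + 1))) ≤ ∑ i, γ i := by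
  classical
  have hp' : (0:ℝ) < p := by exact_mod_cast hp
  have hp1 : (1:ℝ) ≤ p := by exact_mod_cast hp
  choose m k hm hk hγeq using fun i => (hγ i).1
  set M : Fin n → ℕ := fun i => if k i = 0 then 1 else m i with hMdef
  set a : Fin n → ℝ := fun i => (k i : ℝ) / ((p:ℝ) * (M i)) with hadef
  have hM1 : ∀ i, 1 ≤ M i := by
    intro i
    simp only [hMdef]
    split
    · exact le_refl 1
    · exact hm i
  have hMr : ∀ i, (1:ℝ) ≤ (M i : ℝ) := fun i => by exact_mod_cast hM1 i
  have hMpos : ∀ i, (0:ℝ) < (p:ℝ) * M i := by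
    intro i
    have := hMr i; nlinarith
  have haeq : ∀ i, γ i = 1 - a i := by
    intro i
    by_cases h0 : k i = 0
    · simp only [hadef, hMdef, h0, if_true, Nat.cast_zero, zero_div, sub_zero]
      rw [hγeq i, h0]
      simp
    · simp only [hadef, hMdef, h0, if_false]
      exact hγeq i
  have ha0 : ∀ i, 0 ≤ a i := by
    intro i
    have := hMpos i
    simp only [hadef]
    positivity
  have ha1 : ∀ i, a i ≤ 1 := by
    intro i
    have hg0 := (hγ i).2.1
    rw [haeq i] at hg0; linarith
  have haM : ∀ i, a i ≤ 1 / (M i : ℝ) := by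
    intro i
    have hMp := hMpos i
    have hMr' : (0:ℝ) < (M i : ℝ) := by nlinarith [hMr i]
    simp only [hadef]
    rw [div_le_div_iff₀ hMp hMr']
    have hk' : (k i:ℝ) ≤ p := by exact_mod_cast hk i
    nlinarith
  set S := ∑ i, a i with hSdef
  have hsum : ∑ i, γ i = (n:ℝ) - S := by
    rw [hSdef]
    rw [show (∑ i, γ i) = ∑ i, (1 - a i) from Finset.sum_congr rfl fun i _ => haeq i]
    rw [Finset.sum_sub_distrib, Finset.sum_const, Finset.card_univ, Fintype.card_fin,
      nsmul_eq_mul, mul_one]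
  have hS0 : 0 ≤ S := Finset.sum_nonneg fun i _ => ha0 i
  have hS1 : S < (n:ℝ) - 1 := by rw [hsum] at h1; linarith
  have hn2 : 2 ≤ n := by
    have : (1:ℝ) < n := by linarith
    exact_mod_cast (by exact_mod_cast this : 1 < n)
  set N := n - 1 with hNdef
  have hNcast : (N:ℝ) = (n:ℝ) - 1 := by
    rw [hNdef, Nat.cast_sub (by omega)]; norm_num
  have hS1' : S < (N:ℝ) := by rw [hNcast]; exact hS1
  have hg6 : min (1/6 : ℝ) (1 / ((p : ℝ) * (p + 1))) ≤ 1/6 := min_le_left _ _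
  have hgp : min (1/6 : ℝ) (1 / ((p : ℝ) * (p + 1))) ≤ 1/((p:ℝ)*(p+1)) := min_le_right _ _
  suffices hgoal : S ≤ (n:ℝ) - 1 - min (1/6 : ℝ) (1 / ((p : ℝ) * (p + 1))) by
    rw [hsum]; linarith
  -- helper: if denominator d ≤ p(p+1) then 1/(p(p+1)) ≤ 1/d
  have hdle : ∀ d : ℕ, 0 < d → d ≤ p * (p+1) → 1/((p:ℝ)*(p+1)) ≤ 1/(d:ℝ) := by
    intro d hd hdle
    have hd' : (0:ℝ) < d := by exact_mod_cast hd
    have : (d:ℝ) ≤ (p:ℝ)*(p+1) := by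
      have := (Nat.cast_le (α := ℝ)).mpr hdle
      push_cast at this; linarith
    apply one_div_le_one_div_of_le hd' this
  set B := Finset.univ.filter (fun i : Fin n => 2 ≤ M i) with hBdef
  have hnotB : ∀ i, i ∉ B → M i = 1 := by
    intro i hi
    simp only [hBdef, Finset.mem_filter, Finset.mem_univ, true_and, not_le] at hi
    have := hM1 i; omega
  obtain hB0 | hB1 | hB2 : B.card = 0 ∨ B.card = 1 ∨ 2 ≤ B.card := by omega
  · -- no B elements: all denominators p
    have hBe : B = ∅ := Finset.card_eq_zero.mp hB0
    have hSval : S = ((∑ i, k i : ℕ) : ℝ)/(p:ℝ) := by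
      rw [hSdef, Nat.cast_sum, Finset.sum_div]
      refine Finset.sum_congr rfl fun i _ => ?_
      have hMi : M i = 1 := hnotB i (by simp [hBe])
      simp only [hadef, hMi, Nat.cast_one, mul_one]
    rw [hSval] at hS1' ⊢
    have := div_gap p (∑ i, k i) N hp hS1'
    have h1p : 1/((p:ℝ)*(p+1)) ≤ 1/(p:ℝ) := hdle p hp (by nlinarith)
    rw [hNcast] at this
    linarith
  · -- exactly one B element
    obtain ⟨b, hb⟩ := Finset.card_eq_one.mp hB1
    have hbB : b ∈ B := by rw [hb]; exact Finset.mem_singleton_self b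
    have hMb : 2 ≤ M b := by
      simp only [hBdef, Finset.mem_filter] at hbB; exact hbB.2
    have hMb' : (2:ℝ) ≤ (M b : ℝ) := by exact_mod_cast hMb
    have hMi : ∀ i, i ≠ b → M i = 1 := by
      intro i hib
      apply hnotB
      rw [hb]; simp [hib]
    set T := ∑ i ∈ Finset.univ.erase b, k i with hTdef
    have hrest : ∑ i ∈ Finset.univ.erase b, a i = (T:ℝ)/(p:ℝ) := by
      rw [hTdef, Nat.cast_sum, Finset.sum_div]
      refine Finset.sum_congr rfl fun i hi => ?_
      have hib : i ≠ b := Finset.ne_of_mem_erase hi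
      simp only [hadef, hMi i hib, Nat.cast_one, mul_one]
    have hSsplit : S = a b + (T:ℝ)/(p:ℝ) := by
      rw [hSdef, ← Finset.add_sum_erase _ a (Finset.mem_univ b), hrest]
    rcases le_or_gt (a b) (1/((p:ℝ)+1)) with h3 | h3
    · have hTp : (T:ℝ)/(p:ℝ) < (N:ℝ) := by
        have := ha0 b; rw [hSsplit] at hS1'; linarith
      have := div_gap p T N hp hTp
      have hid : (1:ℝ)/((p:ℝ)*(p+1)) = 1/(p:ℝ) - 1/((p:ℝ)+1) := by
        field_simp
        ring
      rw [hNcast] at this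
      rw [hSsplit]
      linarith
    · -- a b > 1/(p+1) forces M b ≤ p
      have hMbpos : (0:ℝ) < (M b : ℝ) := by linarith
      have hkb : (k b : ℝ) ≤ p := by exact_mod_cast hk b
      have hmble : M b ≤ p := by
        have h4 := (div_lt_div_iff₀ (by linarith : (0:ℝ) < (p:ℝ)+1) (hMpos b)).mp (by
          simpa only [hadef] using h3)
        -- h4 : 1 * (p * M b) < k b * (p+1)
        have : (M b : ℝ) < (p:ℝ) + 1 := by nlinarith
        have : M b < p + 1 := by exact_mod_cast this
        omega
      have hMb0 : (M b : ℝ) ≠ 0 := ne_of_gt hMbpos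
      have hSval : S = ((T * M b + k b : ℕ) : ℝ)/((p:ℝ) * (M b : ℝ)) := by
        rw [hSsplit]
        push_cast
        rw [add_div, mul_div_mul_right _ _ hMb0]
        simp only [hadef]
        ring
      rw [hSval] at hS1' ⊢
      have hdpos : 0 < p * M b := by positivity
      have := div_gap (p * M b) (T * M b + k b) N hdpos (by
        push_cast
        push_cast at hS1'
        exact hS1')
      have hcast : ((p * M b : ℕ) : ℝ) = (p:ℝ) * (M b : ℝ) := by push_cast; ring
      rw [hcast] at this
      have h1pm : 1/((p:ℝ)*(p+1)) ≤ 1/((p:ℝ)*(M b:ℝ)) := by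
        have := hdle (p * M b) hdpos (by nlinarith [hmble])
        rwa [hcast] at this
      rw [hNcast] at this
      linarith
  · -- at least two B elements
    by_cases hex : ∃ b ∈ B, a b ≤ 1/3
    · obtain ⟨b, hbB, hab⟩ := hex
      have hcard : 1 ≤ (B.erase b).card := by
        rw [Finset.card_erase_of_mem hbB]; omega
      obtain ⟨b', hb'⟩ := Finset.card_pos.mp (show 0 < (B.erase b).card by omega)
      have hne : b' ≠ b := Finset.ne_of_mem_erase hb'
      have hb'B : b' ∈ B := Finset.mem_of_mem_erase hb'
      have hMb' : 2 ≤ M b' := by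
        simp only [hBdef, Finset.mem_filter] at hb'B; exact hb'B.2
      have hab' : a b' ≤ 1/2 := by
        refine le_trans (haM b') ?_
        have : (2:ℝ) ≤ (M b' : ℝ) := by exact_mod_cast hMb'
        apply one_div_le_one_div_of_le (by norm_num) this
      have hb'mem : b' ∈ Finset.univ.erase b := Finset.mem_erase.mpr ⟨hne, Finset.mem_univ b'⟩
      have e1 : S = a b + ∑ i ∈ Finset.univ.erase b, a i :=
        (Finset.add_sum_erase _ a (Finset.mem_univ b)).symm
      have e2 : ∑ i ∈ Finset.univ.erase b, a i
          = a b' + ∑ i ∈ (Finset.univ.erase b).erase b', a i :=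
        (Finset.add_sum_erase _ a hb'mem).symm
      have e3 : ∑ i ∈ (Finset.univ.erase b).erase b', a i
          ≤ ((Finset.univ.erase b).erase b').card • (1:ℝ) :=
        Finset.sum_le_card_nsmul _ _ _ (fun i _ => ha1 i)
      have hcard2 : ((Finset.univ.erase b).erase b').card = n - 2 := by
        rw [Finset.card_erase_of_mem hb'mem, Finset.card_erase_of_mem (Finset.mem_univ b),
          Finset.card_univ, Fintype.card_fin]
        omega
      have e4 : (((Finset.univ.erase b).erase b').card • (1:ℝ)) = (n:ℝ) - 2 := by
        rw [hcard2, nsmul_eq_mul, mul_one, Nat.cast_sub hn2]; norm_num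
      have : S ≤ 1/3 + 1/2 + ((n:ℝ) - 2) := by
        rw [e1, e2]; rw [e4] at e3; linarith
      linarith
    · push_neg at hex
      have hM2 : ∀ i, M i = 1 ∨ M i = 2 := by
        intro i
        by_cases hiB : i ∈ B
        · right
          have hMi2 : 2 ≤ M i := by
            simp only [hBdef, Finset.mem_filter] at hiB; exact hiB.2
          have h5 := lt_of_lt_of_le (hex i hiB) (haM i)
          have hMr' : (0:ℝ) < (M i : ℝ) := by nlinarith [hMr i]
          rw [div_lt_div_iff₀ (by norm_num) hMr'] at h5
          have : (M i : ℝ) < 3 := by nlinarith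
          have : M i < 3 := by exact_mod_cast this
          omega
        · left; exact hnotB i hiB
      have hSval : S = ((∑ i, (if M i = 1 then 2 * k i else k i) : ℕ) : ℝ)/((p:ℝ)*2) := by
        rw [hSdef, Nat.cast_sum, Finset.sum_div]
        refine Finset.sum_congr rfl fun i _ => ?_
        rcases hM2 i with h5 | h5
        · rw [if_pos h5]
          simp only [hadef, h5, Nat.cast_one, mul_one]
          push_cast
          rw [div_eq_div_iff (ne_of_gt hp') (by positivity : ((p:ℝ)*2) ≠ 0)]
          ring
        · rw [if_neg (by omega)]
          simp only [hadef, h5]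
          norm_num
      rw [hSval] at hS1' ⊢
      have hdpos : 0 < p * 2 := by omega
      have := div_gap (p * 2) (∑ i, (if M i = 1 then 2 * k i else k i)) N hdpos (by push_cast; push_cast at hS1'; exact hS1')
      have hcast : ((p * 2 : ℕ) : ℝ) = (p:ℝ) * 2 := by push_cast; ring
      rw [hcast] at this
      have h1pm : 1/((p:ℝ)*(p+1)) ≤ 1/((p:ℝ)*2) := by
        have := hdle (p * 2) hdpos (by nlinarith)
        rwa [hcast] at this
      rw [hNcast] at this
      linarith

theorem glct_one_gap_dim_one (p : ℕ) (hp : 0 < p) (t : ℝ) (ht0 : 0 < t) (ht1 : t < 1)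
    (n : ℕ) (γ : Fin n → ℝ) (hγ : ∀ i, γ i ∈ Phi p) (D : ℕ) (hD : 0 < D)
    (h : (2 : ℝ) = ∑ i, γ i + t * D) :
    t ≤ 1 - min (1/6 : ℝ) (1 / ((p : ℝ) * (p + 1))) := by
  have hp' : (0:ℝ) < p := by exact_mod_cast hp
  have hp1 : (1:ℝ) ≤ p := by exact_mod_cast hp
  have hg6 : min (1/6 : ℝ) (1 / ((p : ℝ) * (p + 1))) ≤ 1/6 := min_le_left _ _
  have hgp : min (1/6 : ℝ) (1 / ((p : ℝ) * (p + 1))) ≤ 1/((p:ℝ)*(p+1)) := min_le_right _ _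
  have hγ0 : ∀ i, 0 ≤ γ i := fun i => (hγ i).2.1
  have hS0 : 0 ≤ ∑ i, γ i := Finset.sum_nonneg fun i _ => hγ0 i
  rcases Nat.lt_or_ge D 3 with hD3 | hD3
  · interval_cases D
    · -- D = 1
      rw [Nat.cast_one, mul_one] at h
      have h1 : 1 < ∑ i, γ i := by linarith
      have := key_gap p n hp γ hγ h1
      linarith
    · -- D = 2
      push_cast at h
      have hSpos : (0:ℝ) < ∑ i, γ i := by linarith
      have hz : (∑ _i : Fin n, (0:ℝ)) < ∑ i, γ i := by simpa using hSpos
      obtain ⟨j, _, hj⟩ := Finset.exists_lt_of_sum_lt hz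
      have hjlb := pos_lb p hp (γ j) (hγ j) hj
      have hSj : γ j ≤ ∑ i, γ i :=
        Finset.single_le_sum (fun i _ => hγ0 i) (Finset.mem_univ j)
      have h2g1 : 2 * min (1/6 : ℝ) (1 / ((p : ℝ) * (p + 1))) ≤ 1/(p:ℝ) := by
        have : (2:ℝ)/((p:ℝ)*(p+1)) ≤ 1/(p:ℝ) := by
          rw [div_le_div_iff₀ (by nlinarith) hp']
          nlinarith
        have h2 : 2 * min (1/6 : ℝ) (1 / ((p : ℝ) * (p + 1))) ≤ 2/((p:ℝ)*(p+1)) := by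
          have e : 2/((p:ℝ)*(p+1)) = 2*(1/((p:ℝ)*(p+1))) := by ring
          linarith
        linarith
      have h2g2 : 2 * min (1/6 : ℝ) (1 / ((p : ℝ) * (p + 1))) ≤ 1/2 := by linarith
      have hming : 2 * min (1/6 : ℝ) (1 / ((p : ℝ) * (p + 1))) ≤ min (1/(p:ℝ)) (1/2) :=
        le_min h2g1 h2g2
      linarith
  · -- D ≥ 3
    have hD' : (3:ℝ) ≤ (D:ℝ) := by exact_mod_cast hD3
    have h2 : t * D ≤ 2 := by linarith
    have h3 : t * 3 ≤ t * D := by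
      apply mul_le_mul_of_nonneg_left hD' (le_of_lt ht0)
    linarith
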